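/- Let E be a real normed vector space, let v_max > 0, and let A, B, C, D ∈ E. Let t_A < t_B and t_C < t_D be real times, and suppose dist(A,B)/(t_B − t_A) ≤ v_max and dist(C,D)/(t_D − t_C) ≤ v_max. Define the constant-speed straight-line trajectories γ₁(t) = A + ((t − t_A)/(t_B − t_A)) • (B − A) and γ₂(t) = C + ((t − t_C)/(t_D − t_C)) • (D − C). If there exists a time t* with t_A ≤ t* ≤ t_B, t_C ≤ t* ≤ t_D and γ₁(t*) = γ₂(t*), then dist(A, D) ≤ v_max · (t_D − t_A) and dist(C, B) ≤ v_max · (t_B − t_C). -/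

import Mathlib

lemma seg_dist_left {E : Type*} [NormedAddCommGroup E] [NormedSpace ℝ E]
    (vmax : ℝ) (P Q : E) (t0 t1 t : ℝ) (h01 : t0 < t1)
    (ht0 : t0 ≤ t) (ht1 : t ≤ t1)
    (hspeed : dist P Q / (t1 - t0) ≤ vmax) :
    dist P (P + ((t - t0) / (t1 - t0)) • (Q - P)) ≤ vmax * (t - t0) := by
  have hpos : (0:ℝ) < t1 - t0 := by linarith
  have hdPQ : dist P Q ≤ vmax * (t1 - t0) := by
    rw [div_le_iff₀ hpos] at hspeed; linarith
  set s : ℝ := (t - t0) / (t1 - t0) with hs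
  have hs0 : 0 ≤ s := div_nonneg (by linarith) hpos.le
  have : dist P (P + s • (Q - P)) = s * dist P Q := by
    rw [dist_eq_norm]
    have : P - (P + s • (Q - P)) = s • (P - Q) := by
      rw [smul_sub, smul_sub]; abel
    rw [this, norm_smul, Real.norm_eq_abs, abs_of_nonneg hs0, dist_eq_norm]
  rw [this]
  calc s * dist P Q ≤ s * (vmax * (t1 - t0)) := by
        exact mul_le_mul_of_nonneg_left hdPQ hs0
    _ = vmax * (s * (t1 - t0)) := by ring
    _ = vmax * (t - t0) := by
        rw [hs, div_mul_cancel₀]; exact hpos.ne'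

lemma seg_dist_right {E : Type*} [NormedAddCommGroup E] [NormedSpace ℝ E]
    (vmax : ℝ) (P Q : E) (t0 t1 t : ℝ) (h01 : t0 < t1)
    (ht0 : t0 ≤ t) (ht1 : t ≤ t1)
    (hspeed : dist P Q / (t1 - t0) ≤ vmax) :
    dist (P + ((t - t0) / (t1 - t0)) • (Q - P)) Q ≤ vmax * (t1 - t) := by
  have hpos : (0:ℝ) < t1 - t0 := by linarith
  have hdPQ : dist P Q ≤ vmax * (t1 - t0) := by
    rw [div_le_iff₀ hpos] at hspeed; linarith
  set s : ℝ := (t - t0) / (t1 - t0) with hs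
  have hs1 : s ≤ 1 := by
    rw [hs, div_le_one hpos]; linarith
  have : dist (P + s • (Q - P)) Q = (1 - s) * dist P Q := by
    rw [dist_eq_norm]
    have : P + s • (Q - P) - Q = (1 - s) • (P - Q) := by
      rw [sub_smul, one_smul, smul_sub, smul_sub]; abel
    rw [this, norm_smul, Real.norm_eq_abs, abs_of_nonneg (by linarith), dist_eq_norm]
  rw [this]
  calc (1 - s) * dist P Q ≤ (1 - s) * (vmax * (t1 - t0)) :=
        mul_le_mul_of_nonneg_left hdPQ (by linarith)
    _ = vmax * ((1 - s) * (t1 - t0)) := by ring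
    _ = vmax * (t1 - t) := by
        rw [hs]; field_simp; ring

/-- Temporal-feasibility step: a collision of the two constant-speed straight-line
trajectories implies the swapped direct assignments are traversable at speed at
most `vmax`. -/
theorem swapped_assignment_feasible
    {E : Type*} [NormedAddCommGroup E] [NormedSpace ℝ E]
    (vmax : ℝ) (hv : 0 < vmax)
    (A B C D : E) (tA tB tC tD : ℝ)
    (hAB : tA < tB) (hCD : tC < tD)
    (hv₁ : dist A B / (tB - tA) ≤ vmax)
    (hv₂ : dist C D / (tD - tC) ≤ vmax)
    (γ₁ γ₂ : ℝ → E)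
    (hγ₁ : ∀ t, γ₁ t = A + ((t - tA) / (tB - tA)) • (B - A))
    (hγ₂ : ∀ t, γ₂ t = C + ((t - tC) / (tD - tC)) • (D - C))
    (hcol : ∃ t, tA ≤ t ∧ t ≤ tB ∧ tC ≤ t ∧ t ≤ tD ∧ γ₁ t = γ₂ t) :
    dist A D ≤ vmax * (tD - tA) ∧ dist C B ≤ vmax * (tB - tC) := by
  obtain ⟨t, h1, h2, h3, h4, heq⟩ := hcol
  rw [hγ₁ t, hγ₂ t] at heq
  have hA := seg_dist_left vmax A B tA tB t hAB h1 h2 hv₁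
  have hB := seg_dist_right vmax A B tA tB t hAB h1 h2 hv₁
  have hC := seg_dist_left vmax C D tC tD t hCD h3 h4 hv₂
  have hD := seg_dist_right vmax C D tC tD t hCD h3 h4 hv₂
  constructor
  · calc dist A D ≤ dist A (A + ((t - tA) / (tB - tA)) • (B - A))
          + dist (A + ((t - tA) / (tB - tA)) • (B - A)) D := dist_triangle _ _ _
      _ = dist A (A + ((t - tA) / (tB - tA)) • (B - A))
          + dist (C + ((t - tC) / (tD - tC)) • (D - C)) D := by rw [heq]
      _ ≤ vmax * (t - tA) + vmax * (tD - t) := add_le_add hA hD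
      _ = vmax * (tD - tA) := by ring
  · calc dist C B ≤ dist C (C + ((t - tC) / (tD - tC)) • (D - C))
          + dist (C + ((t - tC) / (tD - tC)) • (D - C)) B := dist_triangle _ _ _
      _ = dist C (C + ((t - tC) / (tD - tC)) • (D - C))
          + dist (A + ((t - tA) / (tB - tA)) • (B - A)) B := by rw [heq]
      _ ≤ vmax * (t - tC) + vmax * (tB - t) := add_le_add hC hB
      _ = vmax * (tB - tC) := by ring
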